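/- Let σ be an adjacency-free permutation of length n, and let π = σ[α_1, …, α_n] be a proper inflation of σ (each α_i a nonempty permutation) in which every α_i belongs to {1, 12, 21}. Then the interval [σ, π] in the pattern-containment poset is isomorphic to a Boolean lattice of rank |π| − |σ|, and consequently μ(σ, π) = (−1)^{|π| − |σ|}. In particular, if μ(σ,π) = 0 for a proper inflation π of an adjacency-free σ, then some α_i is not in {1, 12, 21}. -/

import Mathlib

open scoped Classical

/-- Pattern containment of permutations. -/
def Contains {k n : ℕ} (σ : Equiv.Perm (Fin k)) (π : Equiv.Perm (Fin n)) : Prop :=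
  ∃ f : Fin k ↪o Fin n, ∀ i j : Fin k, σ i < σ j ↔ π (f i) < π (f j)

/-- Strict pattern containment. -/
def StrictContains {k n : ℕ} (σ : Equiv.Perm (Fin k)) (π : Equiv.Perm (Fin n)) : Prop :=
  Contains σ π ∧ ¬ Contains π σ

/-- The Möbius function of the permutation containment poset. -/
noncomputable def mu {k : ℕ} (σ : Equiv.Perm (Fin k)) : (n : ℕ) → Equiv.Perm (Fin n) → ℤ
  | n, π =>
    if Contains σ π then
      if Contains π σ then 1
      else
        - ∑ m ∈ (Finset.range n).attach, ∑ τ : Equiv.Perm (Fin m.1),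
            (if Contains σ τ ∧ Contains τ π then mu σ m.1 τ else 0)
    else 0
termination_by n π => n
decreasing_by exact Finset.mem_range.mp m.2

def pone : Equiv.Perm (Fin 1) := 1
noncomputable def p12 : Equiv.Perm (Fin 2) := 1
noncomputable def p21 : Equiv.Perm (Fin 2) := Equiv.ofBijective ![1, 0] (by decide)
noncomputable def p123 : Equiv.Perm (Fin 3) := 1
noncomputable def p132 : Equiv.Perm (Fin 3) := Equiv.ofBijective ![0, 2, 1] (by decide)
noncomputable def p321 : Equiv.Perm (Fin 3) := Equiv.ofBijective ![2, 1, 0] (by decide)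
noncomputable def p1243 : Equiv.Perm (Fin 4) := Equiv.ofBijective ![0, 1, 3, 2] (by decide)
noncomputable def p2143 : Equiv.Perm (Fin 4) := Equiv.ofBijective ![1, 0, 3, 2] (by decide)
noncomputable def p21354 : Equiv.Perm (Fin 5) := Equiv.ofBijective ![1, 0, 2, 4, 3] (by decide)
noncomputable def p45132 : Equiv.Perm (Fin 5) := Equiv.ofBijective ![3, 4, 0, 2, 1] (by decide)
noncomputable def p25143 : Equiv.Perm (Fin 5) := Equiv.ofBijective ![1, 4, 0, 3, 2] (by decide)
noncomputable def p14532 : Equiv.Perm (Fin 5) := Equiv.ofBijective ![0, 3, 4, 2, 1] (by decide)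
noncomputable def p24513 : Equiv.Perm (Fin 5) := Equiv.ofBijective ![1, 3, 4, 0, 2] (by decide)
noncomputable def p256143 : Equiv.Perm (Fin 6) := Equiv.ofBijective ![1, 4, 5, 0, 3, 2] (by decide)

/-- `π` has an interval (contiguous positions, contiguous values) order-isomorphic to `φ`. -/
def HasIntervalIso {n m : ℕ} (π : Equiv.Perm (Fin n)) (φ : Equiv.Perm (Fin m)) : Prop :=
  ∃ s b : ℕ, s + m ≤ n ∧
    ∀ j : Fin m, ∀ hj : s + j.val < n, ((π ⟨s + j.val, hj⟩) : Fin n).val = b + (φ j).val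

def HasUpAdjacency {n : ℕ} (π : Equiv.Perm (Fin n)) : Prop := HasIntervalIso π p12
def HasDownAdjacency {n : ℕ} (π : Equiv.Perm (Fin n)) : Prop := HasIntervalIso π p21
def OpposingAdjacencies {n : ℕ} (π : Equiv.Perm (Fin n)) : Prop :=
  HasUpAdjacency π ∧ HasDownAdjacency π
def AdjacencyFree {n : ℕ} (π : Equiv.Perm (Fin n)) : Prop :=
  ¬ HasUpAdjacency π ∧ ¬ HasDownAdjacency π

def revP {n : ℕ} (π : Equiv.Perm (Fin n)) : Equiv.Perm (Fin n) := (Fin.revPerm).trans π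
def complP {n : ℕ} (π : Equiv.Perm (Fin n)) : Equiv.Perm (Fin n) := π.trans Fin.revPerm

/-- The eight symmetries of a permutation under the dihedral group of the square. -/
def symmetries {n : ℕ} (π : Equiv.Perm (Fin n)) : Set (Equiv.Perm (Fin n)) :=
  {π, revP π, complP π, revP (complP π), π⁻¹, revP π⁻¹, complP π⁻¹, revP (complP π⁻¹)}

def posMap (c m i : ℕ) : ℕ := if i ≤ c then i else i + m - 1

/-- `π` is the inflation of `σ` at position `c` by `α` (all other points singletons). -/
def IsInflationAt {n m N : ℕ} (σ : Equiv.Perm (Fin n)) (c : Fin n) (α : Equiv.Perm (Fin m))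
    (π : Equiv.Perm (Fin N)) : Prop :=
  N + 1 = n + m ∧
  (∃ b : ℕ, ∀ j : Fin m, ∀ hj : c.val + j.val < N,
      ((π ⟨c.val + j.val, hj⟩) : Fin N).val = b + (α j).val) ∧
  (∀ i i' : Fin n, ∀ hi : posMap c.val m i.val < N, ∀ hi' : posMap c.val m i'.val < N,
    (σ i < σ i' ↔ π ⟨posMap c.val m i.val, hi⟩ < π ⟨posMap c.val m i'.val, hi'⟩))

/-- `π` is the inflation `σ[α 0, …, α (n-1)]`. -/
def IsInflation {n N : ℕ} (σ : Equiv.Perm (Fin n))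
    (α : Fin n → Σ m : ℕ, Equiv.Perm (Fin m)) (π : Equiv.Perm (Fin N)) : Prop :=
  (∀ i, 1 ≤ (α i).1) ∧
  N = ∑ i, (α i).1 ∧
  (∃ b : Fin n → ℕ,
    (∀ i : Fin n, ∀ j : Fin (α i).1,
        ∀ hj : (∑ i' ∈ Finset.univ.filter (fun i' => i' < i), (α i').1) + j.val < N,
      ((π ⟨(∑ i' ∈ Finset.univ.filter (fun i' => i' < i), (α i').1) + j.val, hj⟩) : Fin N).val
        = b i + ((α i).2 j).val) ∧
    (∀ i i' : Fin n, σ i < σ i' ↔ b i < b i'))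

abbrev SigmaPerm := Σ m : ℕ, Equiv.Perm (Fin m)

def SContains (σ τ : SigmaPerm) : Prop := Contains σ.2 τ.2
def SLt (σ τ : SigmaPerm) : Prop := StrictContains σ.2 τ.2

/-- The set of strongly zero permutations. -/
def SZ : Set SigmaPerm :=
  {φ | ∀ (N : ℕ) (π : Equiv.Perm (Fin N)), HasIntervalIso π φ.2 → mu pone N π = 0}

/-- The closure of a permutation: everything it contains. -/
def permClosure (φ : SigmaPerm) : Set SigmaPerm := {τ | SContains τ φ}

/-- The cover of `φ`: permutations covered by `φ`. -/
def permCover (φ : SigmaPerm) : Set SigmaPerm :=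
  {ψ | SLt ψ φ ∧ ¬ ∃ τ : SigmaPerm, SLt ψ τ ∧ SLt τ φ}

/-- The ground of a set of permutations. -/
def permGround (L : Set SigmaPerm) : Set SigmaPerm :=
  (⋃ l ∈ L, permClosure l) \ SZ

def IsCore (ψ φ : SigmaPerm) : Prop :=
  ψ ∈ permCover φ ∧ permGround (permCover φ \ {ψ}) ⊆ permClosure ψ

def Nice (φ : SigmaPerm) : Prop := mu pone φ.1 φ.2 = 0 ∧ ∃ ψ, IsCore ψ φ

/-- A permutation is simple if its only intervals have size 1 or `n`. -/
def IsSimple {n : ℕ} (π : Equiv.Perm (Fin n)) : Prop :=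
  ∀ s m : ℕ, 1 ≤ m → s + m ≤ n →
    (∃ b : ℕ, ∀ j : ℕ, ∀ hj : j < m, ∀ h : s + j < n,
      b ≤ ((π ⟨s + j, h⟩) : Fin n).val ∧ ((π ⟨s + j, h⟩) : Fin n).val < b + m) →
    m = 1 ∨ m = n

/-- The number of simple permutations of length `m`. -/
noncomputable def numSimple (m : ℕ) : ℕ :=
  (Finset.univ.filter (fun π : Equiv.Perm (Fin m) => IsSimple π)).card

/-- The proportion of permutations of length `n` with principal Möbius function zero. -/
noncomputable def Zprop (n : ℕ) : ℝ :=
  ((Finset.univ.filter (fun π : Equiv.Perm (Fin n) => mu pone n π = 0)).card : ℝ) / (n.factorial : ℝ)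

/-- The proportion of permutations of length `n` that are strongly zero. -/
noncomputable def Zsz (n : ℕ) : ℝ :=
  ((Finset.univ.filter (fun π : Equiv.Perm (Fin n) => (⟨n, π⟩ : SigmaPerm) ∈ SZ)).card : ℝ) / (n.factorial : ℝ)

section Prelim
open Finset

lemma strictMono_fin_eq_id {k : ℕ} {f : Fin k → Fin k} (hf : StrictMono f) : ∀ a, f a = a := by
  have hinj : Function.Injective f := hf.injective
  have hsurj := Finite.injective_iff_surjective.mp hinj
  obtain ⟨g, hg⟩ : ∃ g : Fin k → Fin k, ∀ a, f (g a) = a :=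
    ⟨fun a => (hsurj a).choose, fun a => (hsurj a).choose_spec⟩
  have hgs : StrictMono g := by
    intro x y hxy
    rcases lt_trichotomy (g x) (g y) with h | h | h
    · exact h
    · exfalso; rw [← hg x, ← hg y, h] at hxy; exact lt_irrefl _ hxy
    · exfalso; have := hf h; rw [hg x, hg y] at this
      exact absurd hxy (not_lt.2 this.le)
  intro a
  haveI : WellFoundedLT (Fin k) := Finite.to_wellFoundedLT
  have h1 : a ≤ f a := hf.le_apply
  have h2 : f a ≤ a := by
    calc f a ≤ f (g a) := hf.monotone (hgs.le_apply (x := a))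
    _ = a := hg a
  exact le_antisymm h2 h1

lemma contains_refl {k : ℕ} (τ : Equiv.Perm (Fin k)) : Contains τ τ :=
  ⟨OrderEmbedding.ofStrictMono id strictMono_id, fun _ _ => Iff.rfl⟩

lemma contains_trans {a b c : ℕ} {x : Equiv.Perm (Fin a)} {y : Equiv.Perm (Fin b)}
    {z : Equiv.Perm (Fin c)} (h1 : Contains x y) (h2 : Contains y z) : Contains x z := by
  obtain ⟨f, hf⟩ := h1; obtain ⟨g, hg⟩ := h2
  exact ⟨f.trans g, fun i j => (hf i j).trans (hg (f i) (f j))⟩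

lemma contains_le {a b : ℕ} {x : Equiv.Perm (Fin a)} {y : Equiv.Perm (Fin b)}
    (h : Contains x y) : a ≤ b := by
  obtain ⟨f, -⟩ := h
  simpa using Fintype.card_le_of_injective f f.injective

lemma contains_antisymm_eq {k : ℕ} {x y : Equiv.Perm (Fin k)} (h : Contains x y) : x = y := by
  obtain ⟨f, hf⟩ := h
  have hfid : ∀ a, f a = a := strictMono_fin_eq_id f.strictMono
  have hiff : ∀ i j, x i < x j ↔ y i < y j := by
    intro i j; rw [hf i j, hfid i, hfid j]
  have hg : StrictMono (fun v => y (x.symm v)) := by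
    intro v w hvw
    exact (hiff (x.symm v) (x.symm w)).mp (by simpa using hvw)
  have hgid := strictMono_fin_eq_id hg
  apply Equiv.ext; intro i
  have h2 := hgid (x i); simpa using h2.symm

lemma sigma_eq_of_contains {a b : ℕ} {x : Equiv.Perm (Fin a)} {y : Equiv.Perm (Fin b)}
    (hab : a = b) (h : Contains x y) : (⟨a, x⟩ : SigmaPerm) = ⟨b, y⟩ := by
  subst hab; exact congrArg _ (contains_antisymm_eq h)

lemma perm_val_succ {k : ℕ} (τ : Equiv.Perm (Fin k)) {p q : Fin k}
    (hlt : τ p < τ q) (hno : ∀ x, ¬(τ p < τ x ∧ τ x < τ q)) : (τ q).val = (τ p).val + 1 := by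
  by_contra hne
  have hlt' : (τ p).val < (τ q).val := hlt
  have h1 : (τ p).val + 1 < (τ q).val := by omega
  have hv : (τ p).val + 1 < k := lt_trans h1 (τ q).isLt
  exact hno (τ.symm ⟨(τ p).val + 1, hv⟩)
    (by constructor <;> simp [Fin.lt_def] <;> omega)

lemma card_filter_univ_lt {n : ℕ} (v : Fin n) :
    (Finset.univ.filter (fun x => x < v)).card = v.val := by
  have : Finset.univ.filter (fun x => x < v) = Finset.Iio v := by ext x; simp
  rw [this, Fin.card_Iio]

lemma perm_val_eq_card {n : ℕ} (σ : Equiv.Perm (Fin n)) (i : Fin n) :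
    (σ i).val = (Finset.univ.filter (fun x => σ x < σ i)).card := by
  rw [← card_filter_univ_lt (σ i)]
  apply Finset.card_bij (fun a _ => σ.symm a)
  · intro a ha; simp only [Finset.mem_filter, Finset.mem_univ, true_and] at ha ⊢; simpa using ha
  · intro a _ b _ hab; exact σ.symm.injective hab
  · intro b hb; simp only [Finset.mem_filter, Finset.mem_univ, true_and] at hb
    exact ⟨σ b, by simpa using hb, by simp⟩

lemma strictMono_val_eq_card {k N : ℕ} {h : Fin k → Fin N} (hm : StrictMono h) (p : Fin k) :
    p.val = (Finset.univ.filter (fun a => h a < h p)).card := by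
  rw [← card_filter_univ_lt p]
  congr 1; ext a; simp [hm.lt_iff_lt]

end Prelim
open Finset in
def offf {n : ℕ} (m : Fin n → ℕ) (i : Fin n) : ℕ :=
  ∑ i' ∈ Finset.univ.filter (fun i' => i' < i), m i'

structure BlockSystem (n N : ℕ) (σ : Equiv.Perm (Fin n)) (π : Equiv.Perm (Fin N)) where
  m : Fin n → ℕ
  b : Fin n → ℕ
  hm : ∀ i, m i = 1 ∨ m i = 2
  hN : N = ∑ i, m i
  hval : ∀ i : Fin n, ∀ j, j < m i → ∀ hj : offf m i + j < N,
      b i ≤ (π ⟨offf m i + j, hj⟩).val ∧ (π ⟨offf m i + j, hj⟩).val < b i + m i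
  hord : ∀ i i', σ i < σ i' ↔ b i < b i'

namespace BlockSystem

variable {n N : ℕ} {σ : Equiv.Perm (Fin n)} {π : Equiv.Perm (Fin N)}
variable (B : BlockSystem n N σ π)

lemma m_pos (i : Fin n) : 1 ≤ B.m i := by rcases B.hm i with h | h <;> omega

lemma m_le_two (i : Fin n) : B.m i ≤ 2 := by rcases B.hm i with h | h <;> omega

lemma off_add_le {i i' : Fin n} (h : i < i') : offf B.m i + B.m i ≤ offf B.m i' := by
  have hsub : insert i (Finset.univ.filter (fun x => x < i)) ⊆
      Finset.univ.filter (fun x => x < i') := by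
    intro x hx
    rcases Finset.mem_insert.mp hx with rfl | hx
    · simp [h]
    · simp only [Finset.mem_filter, Finset.mem_univ, true_and] at hx ⊢
      exact lt_trans hx h
  have hnot : i ∉ Finset.univ.filter (fun x => x < i) := by simp
  have := Finset.sum_le_sum_of_subset hsub (f := B.m)
  rwa [Finset.sum_insert hnot, add_comm] at this

lemma off_add_le_N (i : Fin n) : offf B.m i + B.m i ≤ N := by
  have hsub : insert i (Finset.univ.filter (fun x => x < i)) ⊆ Finset.univ := by
    intro x _; simp
  have hnot : i ∉ Finset.univ.filter (fun x => x < i) := by simp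
  have := Finset.sum_le_sum_of_subset hsub (f := B.m)
  rw [Finset.sum_insert hnot] at this
  have h2 := B.hN
  rw [offf]
  omega

lemma off_succ {i : Fin n} (h : i.val + 1 < n) :
    offf B.m ⟨i.val + 1, h⟩ = offf B.m i + B.m i := by
  have hset : Finset.univ.filter (fun x => x < (⟨i.val + 1, h⟩ : Fin n)) =
      insert i (Finset.univ.filter (fun x => x < i)) := by
    ext x
    simp only [Finset.mem_filter, Finset.mem_univ, true_and, Finset.mem_insert, Fin.lt_def]
    constructor
    · intro hx
      rcases Nat.lt_succ_iff_lt_or_eq.mp hx with h1 | h1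
      · exact Or.inr h1
      · exact Or.inl (Fin.ext h1)
    · rintro (rfl | hx)
      · omega
      · omega
  have hnot : i ∉ Finset.univ.filter (fun x => x < i) := by simp
  rw [offf, hset, Finset.sum_insert hnot, offf, add_comm]

lemma off_last {i : Fin n} (h : i.val + 1 = n) : offf B.m i + B.m i = N := by
  have hset : Finset.univ = insert i (Finset.univ.filter (fun x => x < i)) := by
    ext x
    simp only [Finset.mem_filter, Finset.mem_univ, true_and, Finset.mem_insert, Fin.lt_def]
    constructor
    · intro _
      rcases lt_trichotomy x.val i.val with h1 | h1 | h1
      · exact Or.inr h1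
      · exact Or.inl (Fin.ext h1)
      · omega
    · intro _; trivial
  have hnot : i ∉ Finset.univ.filter (fun x => x < i) := by simp
  have h1 : ∑ x : Fin n, B.m x = B.m i + offf B.m i := by
    rw [hset, Finset.sum_insert hnot]; rfl
  have h2 := B.hN
  omega

lemma off_mono {i i' : Fin n} (h : i ≤ i') : offf B.m i ≤ offf B.m i' := by
  rcases eq_or_lt_of_le h with rfl | h
  · exact le_refl _
  · have := B.off_add_le h; omega

lemma off_zero (h : 0 < n) : offf B.m ⟨0, h⟩ = 0 := by
  rw [offf]
  have : Finset.univ.filter (fun x => x < (⟨0, h⟩ : Fin n)) = ∅ := by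
    ext x; simp [Fin.lt_def]
  rw [this, Finset.sum_empty]

lemma exists_block (p : Fin N) :
    ∃ i : Fin n, offf B.m i ≤ p.val ∧ p.val < offf B.m i + B.m i := by
  have hn : 0 < n := by
    by_contra hn
    have : n = 0 := by omega
    subst this
    have : N = 0 := by rw [B.hN]; simp
    exact absurd p.isLt (by omega)
  have hs : (Finset.univ.filter (fun i : Fin n => offf B.m i ≤ p.val)).Nonempty := by
    refine ⟨⟨0, hn⟩, ?_⟩
    simp [B.off_zero hn]
  set s := Finset.univ.filter (fun i : Fin n => offf B.m i ≤ p.val) with hsdef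
  let i := s.max' hs
  have hi : offf B.m i ≤ p.val := by
    have := s.max'_mem hs
    simp only [hsdef, Finset.mem_filter] at this
    exact this.2
  refine ⟨i, hi, ?_⟩
  by_contra hlt
  push_neg at hlt
  rcases Nat.lt_or_ge (i.val + 1) n with hcase | hcase
  · have hmem : (⟨i.val + 1, hcase⟩ : Fin n) ∈ s := by
      simp only [hsdef, Finset.mem_filter, Finset.mem_univ, true_and]
      rw [B.off_succ hcase]; exact hlt
    have := s.le_max' _ hmem
    simp only [Fin.le_def] at this
    omega
  · have hlast : i.val + 1 = n := by omega
    have := B.off_last hlast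
    omega

noncomputable def blk (p : Fin N) : Fin n := (B.exists_block p).choose

lemma blk_spec (p : Fin N) :
    offf B.m (B.blk p) ≤ p.val ∧ p.val < offf B.m (B.blk p) + B.m (B.blk p) :=
  (B.exists_block p).choose_spec

lemma blk_eq {p : Fin N} {i : Fin n} (h1 : offf B.m i ≤ p.val)
    (h2 : p.val < offf B.m i + B.m i) : B.blk p = i := by
  rcases lt_trichotomy (B.blk p) i with h | h | h
  · have := B.off_add_le h
    have := B.blk_spec p
    omega
  · exact h
  · have := B.off_add_le h
    have := B.blk_spec p
    omega

lemma blk_off {i : Fin n} {j : ℕ} (hj : j < B.m i) (hN' : offf B.m i + j < N) :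
    B.blk ⟨offf B.m i + j, hN'⟩ = i :=
  B.blk_eq (by simp) (by simp; omega)

lemma blk_mono {p q : Fin N} (h : p ≤ q) : B.blk p ≤ B.blk q := by
  by_contra hc
  push_neg at hc
  have h1 := B.off_add_le hc
  have h2 := B.blk_spec p
  have h3 := B.blk_spec q
  have : (p : ℕ) ≤ q := h
  omega

lemma lt_off_iff {q : Fin N} {i : Fin n} : q.val < offf B.m i ↔ B.blk q < i := by
  constructor
  · intro h
    by_contra hc
    push_neg at hc
    have h1 := B.off_mono hc
    have h2 := B.blk_spec q
    omega
  · intro h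
    have := B.off_add_le h
    have := B.blk_spec q
    omega

lemma val_mem (p : Fin N) :
    B.b (B.blk p) ≤ (π p).val ∧ (π p).val < B.b (B.blk p) + B.m (B.blk p) := by
  have hs := B.blk_spec p
  set i := B.blk p
  have hj : p.val - offf B.m i < B.m i := by omega
  have hp : offf B.m i + (p.val - offf B.m i) < N := by omega
  have := B.hval i _ hj hp
  have hpe : (⟨offf B.m i + (p.val - offf B.m i), hp⟩ : Fin N) = p := by
    apply Fin.ext; simp; omega
  rwa [hpe] at this

end BlockSystem
namespace BlockSystem

variable {n N : ℕ} {σ : Equiv.Perm (Fin n)} {π : Equiv.Perm (Fin N)}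
variable (B : BlockSystem n N σ π)

lemma window_attained {i : Fin n} {v : ℕ} (h1 : B.b i ≤ v) (h2 : v < B.b i + B.m i) :
    ∃ p : Fin N, B.blk p = i ∧ (π p).val = v := by
  classical
  set S : Finset (Fin N) := Finset.univ.filter (fun p => B.blk p = i) with hS
  have hoffN := B.off_add_le_N i
  have hmemS : ∀ p : Fin N, p ∈ S ↔ (offf B.m i ≤ p.val ∧ p.val < offf B.m i + B.m i) := by
    intro p
    simp only [hS, Finset.mem_filter, Finset.mem_univ, true_and]
    constructor
    · rintro rfl; exact B.blk_spec p
    · rintro ⟨h1, h2⟩; exact B.blk_eq h1 h2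
  have hcardS : S.card = B.m i := by
    have : S.card = (Finset.Ico (offf B.m i) (offf B.m i + B.m i)).card := by
      apply Finset.card_bij (fun p _ => p.val)
      · intro p hp; rw [hmemS] at hp; simp [hp.1, hp.2]
      · intro p _ q _ hpq; exact Fin.ext hpq
      · intro j hj
        simp only [Finset.mem_Ico] at hj
        exact ⟨⟨j, by omega⟩, by rw [hmemS]; exact hj, rfl⟩
    rw [this, Nat.card_Ico]; omega
  set VI : Finset ℕ := S.image (fun p => (π p).val) with hVI
  have hinj : ∀ p ∈ S, ∀ q ∈ S, (π p).val = (π q).val → p = q := by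
    intro p _ q _ h; exact π.injective (Fin.ext h)
  have hcardVI : VI.card = B.m i := by
    rw [hVI, Finset.card_image_of_injOn hinj, hcardS]
  have hsub : VI ⊆ Finset.Ico (B.b i) (B.b i + B.m i) := by
    intro v hv
    rw [hVI, Finset.mem_image] at hv
    obtain ⟨p, hp, rfl⟩ := hv
    rw [hmemS] at hp
    have hblk : B.blk p = i := B.blk_eq hp.1 hp.2
    have := B.val_mem p
    rw [hblk] at this
    simp [this.1, this.2]
  have heq : VI = Finset.Ico (B.b i) (B.b i + B.m i) :=
    Finset.eq_of_subset_of_card_le hsub (by rw [hcardVI, Nat.card_Ico]; omega)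
  have hv : v ∈ VI := by rw [heq]; simp; omega
  rw [hVI, Finset.mem_image] at hv
  obtain ⟨p, hp, hpv⟩ := hv
  rw [hmemS] at hp
  exact ⟨p, B.blk_eq hp.1 hp.2, hpv⟩

lemma window_disjoint {i i' : Fin n} (h : i ≠ i') {v : ℕ}
    (h1 : B.b i ≤ v) (h2 : v < B.b i + B.m i)
    (h3 : B.b i' ≤ v) (h4 : v < B.b i' + B.m i') : False := by
  obtain ⟨p, hp, hpv⟩ := B.window_attained h1 h2
  obtain ⟨q, hq, hqv⟩ := B.window_attained h3 h4
  have hpq : p = q := π.injective (Fin.ext (by rw [hpv, hqv]))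
  subst hpq
  rw [hp] at hq
  exact h hq

lemma b_gap {i i' : Fin n} (h : B.b i < B.b i') : B.b i + B.m i ≤ B.b i' := by
  by_contra hc
  push_neg at hc
  exact B.window_disjoint (i := i) (i' := i')
    (by intro he; rw [he] at h; exact lt_irrefl _ h)
    (le_of_lt h) hc (le_refl _) (by have := B.m_pos i'; omega)

lemma val_lt_iff {P Q : Fin N} (h : B.blk P ≠ B.blk Q) :
    ((π P).val < (π Q).val ↔ B.b (B.blk P) < B.b (B.blk Q)) := by
  have hP := B.val_mem P
  have hQ := B.val_mem Q
  constructor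
  · intro hlt
    rcases lt_trichotomy (B.b (B.blk P)) (B.b (B.blk Q)) with h1 | h1 | h1
    · exact h1
    · exfalso
      refine B.window_disjoint h (le_refl _) ?_ ?_ ?_
      · have := B.m_pos (B.blk P); omega
      · omega
      · have := B.m_pos (B.blk Q); omega
    · have := B.b_gap h1; omega
  · intro h1
    have := B.b_gap h1; omega

lemma rank_b (i : Fin n) :
    (σ i).val = (Finset.univ.filter (fun x => B.b x < B.b i)).card := by
  rw [perm_val_eq_card σ i]
  congr 1
  ext x
  simp [B.hord]

lemma up_of_b_succ {i : Fin n} (h1 : i.val + 1 < n)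
    (h2 : B.b ⟨i.val + 1, h1⟩ = B.b i + B.m i) : HasUpAdjacency σ := by
  set i' : Fin n := ⟨i.val + 1, h1⟩ with hi'
  have hval' : (σ i').val = (σ i).val + 1 := by
    rw [B.rank_b, B.rank_b]
    have hset : Finset.univ.filter (fun x => B.b x < B.b i') =
        insert i (Finset.univ.filter (fun x => B.b x < B.b i)) := by
      ext x
      simp only [Finset.mem_filter, Finset.mem_univ, true_and, Finset.mem_insert]
      rw [h2]
      constructor
      · intro hx
        rcases Nat.lt_or_ge (B.b x) (B.b i) with hlt | hge
        · exact Or.inr hlt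
        · left
          by_contra hne
          exact B.window_disjoint hne (le_refl _) (by have := B.m_pos x; omega) hge hx
      · rintro (rfl | hx)
        · have := B.m_pos x; omega
        · have := B.m_pos i; omega
    rw [hset, Finset.card_insert_of_notMem (by simp)]
  refine ⟨i.val, (σ i).val, by omega, ?_⟩
  rintro ⟨jv, hj2⟩ hj
  interval_cases jv
  · have he : (⟨i.val + 0, hj⟩ : Fin n) = i := Fin.ext (by simp)
    have hp : p12 ⟨0, hj2⟩ = ⟨0, hj2⟩ := rfl
    rw [he, hp]; simp
  · have he : (⟨i.val + 1, hj⟩ : Fin n) = i' := rfl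
    have hp : p12 ⟨1, hj2⟩ = ⟨1, hj2⟩ := rfl
    rw [he, hp, hval']

lemma down_of_b_succ {i : Fin n} (h1 : i.val + 1 < n)
    (h2 : B.b i = B.b ⟨i.val + 1, h1⟩ + B.m ⟨i.val + 1, h1⟩) : HasDownAdjacency σ := by
  set i' : Fin n := ⟨i.val + 1, h1⟩ with hi'
  have hval' : (σ i).val = (σ i').val + 1 := by
    rw [B.rank_b, B.rank_b]
    have hset : Finset.univ.filter (fun x => B.b x < B.b i) =
        insert i' (Finset.univ.filter (fun x => B.b x < B.b i')) := by
      ext x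
      simp only [Finset.mem_filter, Finset.mem_univ, true_and, Finset.mem_insert]
      rw [h2]
      constructor
      · intro hx
        rcases Nat.lt_or_ge (B.b x) (B.b i') with hlt | hge
        · exact Or.inr hlt
        · left
          by_contra hne
          exact B.window_disjoint hne (le_refl _) (by have := B.m_pos x; omega) hge hx
      · rintro (rfl | hx)
        · have := B.m_pos i'; omega
        · have := B.m_pos i'; omega
    rw [hset, Finset.card_insert_of_notMem (by simp)]
  refine ⟨i.val, (σ i').val, by omega, ?_⟩
  rintro ⟨jv, hj2⟩ hj
  interval_cases jv
  · have he : (⟨i.val + 0, hj⟩ : Fin n) = i := Fin.ext (by simp)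
    have hp : (p21 ⟨0, hj2⟩).val = 1 := rfl
    rw [he]
    omega
  · have he : (⟨i.val + 1, hj⟩ : Fin n) = i' := rfl
    have hp : (p21 ⟨1, hj2⟩).val = 0 := rfl
    rw [he, hp]; simp

lemma pair_vals {i : Fin n} (hmi : B.m i = 2) (h0 : offf B.m i < N)
    (h1 : offf B.m i + 1 < N) :
    ((π ⟨offf B.m i, h0⟩).val = B.b i ∧ (π ⟨offf B.m i + 1, h1⟩).val = B.b i + 1) ∨
    ((π ⟨offf B.m i, h0⟩).val = B.b i + 1 ∧ (π ⟨offf B.m i + 1, h1⟩).val = B.b i) := by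
  have ha := B.hval i 0 (by omega) (by omega)
  have hb := B.hval i 1 (by omega) (by omega)
  have e0 : (⟨offf B.m i + 0, by omega⟩ : Fin N) = ⟨offf B.m i, h0⟩ := Fin.ext (by simp)
  rw [e0] at ha
  have hne : (π ⟨offf B.m i, h0⟩).val ≠ (π ⟨offf B.m i + 1, h1⟩).val := by
    intro he
    have := π.injective (Fin.ext he)
    have := congrArg Fin.val this
    simp at this
  omega

end BlockSystem
def PRep {N k : ℕ} (π : Equiv.Perm (Fin N)) (τ : Equiv.Perm (Fin k)) (h : Fin k → Fin N) : Prop :=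
  StrictMono h ∧ ∀ a c : Fin k, τ a < τ c ↔ π (h a) < π (h c)

def AdjAt {k : ℕ} (τ : Equiv.Perm (Fin k)) (p : Fin k) : Prop :=
  ∃ hp : p.val + 1 < k,
    ((τ ⟨p.val + 1, hp⟩).val = (τ p).val + 1 ∨ (τ p).val = (τ ⟨p.val + 1, hp⟩).val + 1)

lemma upAdj_of_vals {n : ℕ} {σ : Equiv.Perm (Fin n)} {a : Fin n} (h1 : a.val + 1 < n)
    (h2 : (σ ⟨a.val + 1, h1⟩).val = (σ a).val + 1) : HasUpAdjacency σ := by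
  refine ⟨a.val, (σ a).val, by omega, ?_⟩
  rintro ⟨jv, hj2⟩ hj
  interval_cases jv
  · have he : (⟨a.val + 0, hj⟩ : Fin n) = a := Fin.ext (by simp)
    have hp : p12 ⟨0, hj2⟩ = ⟨0, hj2⟩ := rfl
    rw [he, hp]; simp
  · have he : (⟨a.val + 1, hj⟩ : Fin n) = ⟨a.val + 1, h1⟩ := rfl
    have hp : p12 ⟨1, hj2⟩ = ⟨1, hj2⟩ := rfl
    rw [he, hp, h2]

lemma downAdj_of_vals {n : ℕ} {σ : Equiv.Perm (Fin n)} {a : Fin n} (h1 : a.val + 1 < n)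
    (h2 : (σ a).val = (σ ⟨a.val + 1, h1⟩).val + 1) : HasDownAdjacency σ := by
  refine ⟨a.val, (σ ⟨a.val + 1, h1⟩).val, by omega, ?_⟩
  rintro ⟨jv, hj2⟩ hj
  interval_cases jv
  · have he : (⟨a.val + 0, hj⟩ : Fin n) = a := Fin.ext (by simp)
    have hp : (p21 ⟨0, hj2⟩).val = 1 := rfl
    rw [he]; omega
  · have he : (⟨a.val + 1, hj⟩ : Fin n) = ⟨a.val + 1, h1⟩ := rfl
    have hp : (p21 ⟨1, hj2⟩).val = 0 := rfl
    rw [he, hp]; simp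

namespace BlockSystem

variable {n N : ℕ} {σ : Equiv.Perm (Fin n)} {π : Equiv.Perm (Fin N)}
variable (B : BlockSystem n N σ π)

def Hit {k : ℕ} (h : Fin k → Fin N) : Prop := ∀ i : Fin n, ∃ a, B.blk (h a) = i

noncomputable def Dbl {k : ℕ} (h : Fin k → Fin N) : Finset (Fin n) :=
  Finset.univ.filter (fun i => B.m i = 2 ∧ (∃ a, (h a).val = offf B.m i) ∧
    (∃ a, (h a).val = offf B.m i + 1))

lemma mem_Dbl {k : ℕ} {h : Fin k → Fin N} {i : Fin n} :
    i ∈ B.Dbl h ↔ B.m i = 2 ∧ (∃ a, (h a).val = offf B.m i) ∧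
      (∃ a, (h a).val = offf B.m i + 1) := by
  simp [Dbl]

lemma pos_cases {k : ℕ} {h : Fin k → Fin N} {a : Fin k} {i : Fin n}
    (hb : B.blk (h a) = i) :
    (h a).val = offf B.m i ∨ (B.m i = 2 ∧ (h a).val = offf B.m i + 1) := by
  have h1 := B.blk_spec (h a)
  rw [hb] at h1
  have h2 := B.m_le_two i
  have h3 := B.m_pos i
  omega

lemma fiber_card {k : ℕ} {τ : Equiv.Perm (Fin k)} {h : Fin k → Fin N}
    (hr : PRep π τ h) (hhit : B.Hit h) (l : Fin n) :
    (Finset.univ.filter (fun a => B.blk (h a) = l)).card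
      = 1 + (if l ∈ B.Dbl h then 1 else 0) := by
  obtain ⟨a0, ha0⟩ := hhit l
  have hinj := hr.1.injective
  by_cases hd : l ∈ B.Dbl h
  · obtain ⟨hm2, ⟨a1, ha1⟩, ⟨a2, ha2⟩⟩ := B.mem_Dbl.mp hd
    have hoffN := B.off_add_le_N l
    have hb1 : B.blk (h a1) = l := B.blk_eq (by omega) (by omega)
    have hb2 : B.blk (h a2) = l := B.blk_eq (by omega) (by omega)
    have hne : a1 ≠ a2 := by intro he; rw [he] at ha1; omega
    have hset : Finset.univ.filter (fun a => B.blk (h a) = l) = {a1, a2} := by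
      ext a
      simp only [Finset.mem_filter, Finset.mem_univ, true_and, Finset.mem_insert,
        Finset.mem_singleton]
      constructor
      · intro hba
        rcases B.pos_cases hba with hc | hc
        · left; apply hinj; exact Fin.ext (by omega)
        · right; apply hinj; exact Fin.ext (by omega)
      · rintro (rfl | rfl) <;> assumption
    rw [hset, if_pos hd]
    rw [Finset.card_insert_of_notMem (by simp [hne]), Finset.card_singleton]
  · have hset : Finset.univ.filter (fun a => B.blk (h a) = l) = {a0} := by
      ext a
      simp only [Finset.mem_filter, Finset.mem_univ, true_and, Finset.mem_singleton]
      constructor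
      · intro hba
        by_contra hne'
        have hne2 : (h a).val ≠ (h a0).val := fun he => hne' (hinj (Fin.ext he))
        rcases B.pos_cases hba with hc | hc <;> rcases B.pos_cases ha0 with hc0 | hc0
        · omega
        · exact hd (B.mem_Dbl.mpr ⟨hc0.1, ⟨a, hc⟩, ⟨a0, hc0.2⟩⟩)
        · exact hd (B.mem_Dbl.mpr ⟨hc.1, ⟨a0, hc0⟩, ⟨a, hc.2⟩⟩)
        · omega
      · rintro rfl; exact ha0
    rw [hset, if_neg hd, Finset.card_singleton]

lemma card_of_rep {k : ℕ} {τ : Equiv.Perm (Fin k)} {h : Fin k → Fin N}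
    (hr : PRep π τ h) (hhit : B.Hit h) : k = n + (B.Dbl h).card := by
  have h1 : (Finset.univ : Finset (Fin k)).card
      = ∑ l : Fin n, (Finset.univ.filter (fun a => B.blk (h a) = l)).card :=
    Finset.card_eq_sum_card_fiberwise (fun a _ => Finset.mem_univ _)
  rw [Finset.card_univ, Fintype.card_fin] at h1
  have h2 : ∑ l : Fin n, (Finset.univ.filter (fun a => B.blk (h a) = l)).card
      = n + (B.Dbl h).card := by
    rw [Finset.sum_congr rfl (fun l _ => B.fiber_card hr hhit l),
      Finset.sum_add_distrib, Finset.sum_const]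
    have h3 : ∑ l : Fin n, (if l ∈ B.Dbl h then 1 else 0) = (B.Dbl h).card := by
      rw [← Finset.card_filter]
      congr 1
      ext l
      simp
    rw [h3]
    simp
  exact h1.trans h2

lemma rep_sigma_blk (hσ : AdjacencyFree σ) {h : Fin n → Fin N} (hr : PRep π σ h) :
    ∀ i, B.blk (h i) = i := by
  have hinj := hr.1.injective
  have aux : ∀ a c : Fin n, a < c → B.blk (h a) = B.blk (h c) → False := by
    intro a c hac hbe
    have hsa := B.blk_spec (h a)
    have hsc := B.blk_spec (h c)
    rw [← hbe] at hsc
    set i := B.blk (h a) with hi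
    have hmle := B.m_le_two i
    have hlt : (h a).val < (h c).val := hr.1 hac
    have hm2 : B.m i = 2 := by omega
    have hpa : (h a).val = offf B.m i := by omega
    have hpc : (h c).val = offf B.m i + 1 := by omega
    have hcv : c.val = a.val + 1 := by
      by_contra hcc
      have hx : a.val + 1 < c.val := by
        have : a.val < c.val := hac
        omega
      have hxk : a.val + 1 < n := by have := c.isLt; omega
      have h1 : (h a).val < (h ⟨a.val + 1, hxk⟩).val := hr.1 (by exact Fin.lt_def.mpr (by simp))
      have h2 : (h ⟨a.val + 1, hxk⟩).val < (h c).val := hr.1 (by exact Fin.lt_def.mpr (by simp; omega))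
      omega
    have hoffN := B.off_add_le_N i
    have h0 : offf B.m i < N := by omega
    have h1n : offf B.m i + 1 < N := by omega
    have hva : (π (h a)).val = (π ⟨offf B.m i, h0⟩).val :=
      congrArg Fin.val (congrArg π (Fin.ext hpa))
    have hvc : (π (h c)).val = (π ⟨offf B.m i + 1, h1n⟩).val :=
      congrArg Fin.val (congrArg π (Fin.ext hpc))
    have hn1 : a.val + 1 < n := by have := c.isLt; omega
    have hce : (⟨a.val + 1, hn1⟩ : Fin n) = c := Fin.ext (by simp; omega)
    rcases B.pair_vals hm2 h0 h1n with ⟨hv1, hv2⟩ | ⟨hv1, hv2⟩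
    · have hσlt : σ a < σ c := (hr.2 a c).mpr (Fin.lt_def.mpr (by omega))
      have hnm : ∀ x, ¬ (σ a < σ x ∧ σ x < σ c) := by
        rintro x ⟨hx1, hx2⟩
        have q1 := Fin.lt_def.mp ((hr.2 a x).mp hx1)
        have q2 := Fin.lt_def.mp ((hr.2 x c).mp hx2)
        omega
      have hsucc := perm_val_succ σ hσlt hnm
      exact hσ.1 (upAdj_of_vals hn1 (by rw [hce]; omega))
    · have hσlt : σ c < σ a := (hr.2 c a).mpr (Fin.lt_def.mpr (by omega))
      have hnm : ∀ x, ¬ (σ c < σ x ∧ σ x < σ a) := by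
        rintro x ⟨hx1, hx2⟩
        have q1 := Fin.lt_def.mp ((hr.2 c x).mp hx1)
        have q2 := Fin.lt_def.mp ((hr.2 x a).mp hx2)
        omega
      have hsucc := perm_val_succ σ hσlt hnm
      exact hσ.2 (downAdj_of_vals hn1 (by rw [hce]; omega))
  have hkinj : Function.Injective (fun i => B.blk (h i)) := by
    intro a c hac
    rcases lt_trichotomy a c with h1 | h1 | h1
    · exact absurd hac (fun he => aux a c h1 he)
    · exact h1
    · exact absurd hac (fun he => aux c a h1 he.symm)
  have hmono : Monotone (fun i => B.blk (h i)) := fun a c hac => B.blk_mono (hr.1.monotone hac)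
  exact strictMono_fin_eq_id (hmono.strictMono_of_injective hkinj)

lemma hit_of_rep_sigma (hσ : AdjacencyFree σ) {h : Fin n → Fin N} (hr : PRep π σ h) :
    B.Hit h := fun i => ⟨i, B.rep_sigma_blk hσ hr i⟩

lemma dbl_of_rep_sigma (hσ : AdjacencyFree σ) {h : Fin n → Fin N} (hr : PRep π σ h) :
    B.Dbl h = ∅ := by
  rw [Finset.eq_empty_iff_forall_notMem]
  intro i hiD
  obtain ⟨hm2, ⟨a1, ha1⟩, ⟨a2, ha2⟩⟩ := B.mem_Dbl.mp hiD
  have hoffN := B.off_add_le_N i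
  have hb1 : B.blk (h a1) = i := B.blk_eq (by omega) (by omega)
  have hb2 : B.blk (h a2) = i := B.blk_eq (by omega) (by omega)
  have e1 : a1 = i := by rw [← B.rep_sigma_blk hσ hr a1]; exact hb1
  have e2 : a2 = i := by rw [← B.rep_sigma_blk hσ hr a2]; exact hb2
  rw [e1] at ha1; rw [e2] at ha2
  omega

lemma contains_of_rep {k k' : ℕ} {τ : Equiv.Perm (Fin k)} {τ' : Equiv.Perm (Fin k')}
    {h : Fin k → Fin N} {h' : Fin k' → Fin N} (hr : PRep π τ h) (hr' : PRep π τ' h')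
    (hhit : B.Hit h') (hD : B.Dbl h ⊆ B.Dbl h') : Contains τ τ' := by
  classical
  have hφex : ∀ a : Fin k, ∃ a', B.blk (h' a') = B.blk (h a) ∧
      (B.blk (h a) ∈ B.Dbl h → (h' a').val = (h a).val) := by
    intro a
    by_cases hd : B.blk (h a) ∈ B.Dbl h
    · obtain ⟨hm2, ⟨a1, ha1⟩, ⟨a2, ha2⟩⟩ := B.mem_Dbl.mp (hD hd)
      have hoffN := B.off_add_le_N (B.blk (h a))
      rcases B.pos_cases (rfl : B.blk (h a) = B.blk (h a)) with hc | hc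
      · exact ⟨a1, B.blk_eq (by omega) (by omega), fun _ => by omega⟩
      · exact ⟨a2, B.blk_eq (by omega) (by omega), fun _ => by omega⟩
    · obtain ⟨a', ha'⟩ := hhit (B.blk (h a))
      exact ⟨a', ha', fun hc => absurd hc hd⟩
  choose φ hφblk hφpos using hφex
  have hsame : ∀ a c : Fin k, a ≠ c → B.blk (h a) = B.blk (h c) →
      (h' (φ a)).val = (h a).val ∧ (h' (φ c)).val = (h c).val := by
    intro a c hne hbe
    have hvne : (h a).val ≠ (h c).val := fun he => hne (hr.1.injective (Fin.ext he))
    have hd : B.blk (h a) ∈ B.Dbl h := by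
      rcases B.pos_cases (rfl : B.blk (h a) = B.blk (h a)) with hc | hc <;>
        rcases B.pos_cases hbe.symm with hc0 | hc0
      · omega
      · exact B.mem_Dbl.mpr ⟨hc0.1, ⟨a, hc⟩, ⟨c, hc0.2⟩⟩
      · exact B.mem_Dbl.mpr ⟨hc.1, ⟨c, hc0⟩, ⟨a, hc.2⟩⟩
      · omega
    exact ⟨hφpos a hd, hφpos c (by rwa [← hbe])⟩
  have hφmono : StrictMono φ := by
    intro a c hac
    have hblk : B.blk (h a) ≤ B.blk (h c) := B.blk_mono (hr.1 hac).le
    rcases eq_or_lt_of_le hblk with heq | hlt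
    · obtain ⟨e1, e2⟩ := hsame a c (ne_of_lt hac) heq
      have hh : h' (φ a) < h' (φ c) := Fin.lt_def.mpr (by rw [e1, e2]; exact hr.1 hac)
      exact hr'.1.lt_iff_lt.mp hh
    · have q1 := B.blk_spec (h' (φ a))
      rw [hφblk a] at q1
      have q2 := B.blk_spec (h' (φ c))
      rw [hφblk c] at q2
      have q3 := B.off_add_le hlt
      exact hr'.1.lt_iff_lt.mp (Fin.lt_def.mpr (by omega))
  have hiff : ∀ a c : Fin k, τ a < τ c ↔ τ' (φ a) < τ' (φ c) := by
    intro a c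
    rw [hr.2 a c, hr'.2 (φ a) (φ c)]
    by_cases hac : a = c
    · subst hac; simp
    · by_cases hbe : B.blk (h a) = B.blk (h c)
      · obtain ⟨e1, e2⟩ := hsame a c hac hbe
        have q1 : π (h' (φ a)) = π (h a) := by congr 1; exact Fin.ext e1
        have q2 : π (h' (φ c)) = π (h c) := by congr 1; exact Fin.ext e2
        rw [q1, q2]
      · have w1 := B.val_lt_iff (P := h a) (Q := h c) hbe
        have w2 := B.val_lt_iff (P := h' (φ a)) (Q := h' (φ c))
          (by rw [hφblk a, hφblk c]; exact hbe)
        rw [hφblk a, hφblk c] at w2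
        constructor
        · intro hx; exact Fin.lt_def.mpr (w2.mpr (w1.mp (Fin.lt_def.mp hx)))
        · intro hx; exact Fin.lt_def.mpr (w1.mpr (w2.mp (Fin.lt_def.mp hx)))
  exact ⟨OrderEmbedding.ofStrictMono φ hφmono, hiff⟩

end BlockSystem
namespace BlockSystem

variable {n N : ℕ} {σ : Equiv.Perm (Fin n)} {π : Equiv.Perm (Fin N)}
variable (B : BlockSystem n N σ π)

lemma b_succ_of_no_middle {k : ℕ} {τ : Equiv.Perm (Fin k)} {h : Fin k → Fin N}
    (hr : PRep π τ h) (hhit : B.Hit h) {P Q : Fin N}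
    (hPQ : (π P).val < (π Q).val) (hne : B.blk P ≠ B.blk Q)
    (hnb : ∀ x : Fin k, ¬ ((π P).val < (π (h x)).val ∧ (π (h x)).val < (π Q).val)) :
    B.b (B.blk Q) = B.b (B.blk P) + B.m (B.blk P) := by
  have hPm := B.val_mem P
  have hQm := B.val_mem Q
  have hbij : B.b (B.blk P) < B.b (B.blk Q) := by
    rw [← B.val_lt_iff hne]; exact hPQ
  have hgap : B.b (B.blk P) + B.m (B.blk P) ≤ B.b (B.blk Q) := B.b_gap hbij
  by_contra hc
  have hvN : B.b (B.blk P) + B.m (B.blk P) < N := by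
    have := (π Q).isLt; omega
  set v : Fin N := π.symm ⟨B.b (B.blk P) + B.m (B.blk P), hvN⟩ with hvdef
  have hlv : B.b (B.blk v) ≤ B.b (B.blk P) + B.m (B.blk P) ∧
      B.b (B.blk P) + B.m (B.blk P) < B.b (B.blk v) + B.m (B.blk v) := by
    have h2 := B.val_mem v
    rw [hvdef] at h2
    simpa using h2
  have hli : B.blk v ≠ B.blk P := by
    intro he; rw [he] at hlv; omega
  have hlj : B.blk v ≠ B.blk Q := by
    intro he; rw [he] at hlv; omega
  obtain ⟨a, ha⟩ := hhit (B.blk v)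
  have ham := B.val_mem (h a)
  rw [ha] at ham
  refine hnb a ⟨?_, ?_⟩
  · have hnw : ¬ (B.b (B.blk v) ≤ (π P).val ∧ (π P).val < B.b (B.blk v) + B.m (B.blk v)) := by
      intro hcon; exact B.window_disjoint hli hcon.1 hcon.2 hPm.1 hPm.2
    omega
  · have hnw : ¬ (B.b (B.blk v) ≤ (π Q).val ∧ (π Q).val < B.b (B.blk v) + B.m (B.blk v)) := by
      intro hcon; exact B.window_disjoint hlj hcon.1 hcon.2 hQm.1 hQm.2
    omega

lemma adjAt_iff (hσ : AdjacencyFree σ) {k : ℕ} {τ : Equiv.Perm (Fin k)} {h : Fin k → Fin N}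
    (hr : PRep π τ h) (hhit : B.Hit h) (p : Fin k) :
    AdjAt τ p ↔ ∃ i ∈ B.Dbl h, (h p).val = offf B.m i := by
  constructor
  · rintro ⟨hp, hcase⟩
    set q : Fin k := ⟨p.val + 1, hp⟩ with hqdef
    have hqv : (q : ℕ) = p.val + 1 := rfl
    have hpq : p < q := Fin.lt_def.mpr (by omega)
    have hPQ : (h p).val < (h q).val := hr.1 hpq
    have hble : B.blk (h p) ≤ B.blk (h q) := B.blk_mono (le_of_lt (Fin.lt_def.mpr hPQ))
    have hsp := B.blk_spec (h p)
    have hsq := B.blk_spec (h q)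
    by_cases hij : B.blk (h p) = B.blk (h q)
    · -- same block
      rw [← hij] at hsq
      have hm2 := B.m_le_two (B.blk (h p))
      have hp1 : (h p).val = offf B.m (B.blk (h p)) := by omega
      have hq1 : (h q).val = offf B.m (B.blk (h p)) + 1 := by omega
      refine ⟨B.blk (h p), B.mem_Dbl.mpr ⟨by omega, ⟨p, hp1⟩, ⟨q, hq1⟩⟩, hp1⟩
    · have hlt : B.blk (h p) < B.blk (h q) := lt_of_le_of_ne hble hij
      exfalso
      -- consecutive blocks
      have hjsucc : (B.blk (h q)).val = (B.blk (h p)).val + 1 := by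
        by_contra hcc
        have hmid : (B.blk (h p)).val + 1 < (B.blk (h q)).val := by
          have : (B.blk (h p)).val < (B.blk (h q)).val := hlt
          omega
        have hln : (B.blk (h p)).val + 1 < n := by
          have := (B.blk (h q)).isLt; omega
        set l : Fin n := ⟨(B.blk (h p)).val + 1, hln⟩ with hldef
        obtain ⟨a, ha⟩ := hhit l
        have hsa := B.blk_spec (h a)
        rw [ha] at hsa
        have o1 := B.off_add_le (show B.blk (h p) < l from Fin.lt_def.mpr (by simp [hldef]))
        have o2 := B.off_add_le (show l < B.blk (h q) from Fin.lt_def.mpr (by simp [hldef]; omega))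
        have hpa : p < a := hr.1.lt_iff_lt.mp (Fin.lt_def.mpr (by omega))
        have haq : a < q := hr.1.lt_iff_lt.mp (Fin.lt_def.mpr (by omega))
        have := Fin.lt_def.mp hpa
        have := Fin.lt_def.mp haq
        omega
      rcases hcase with hup | hdown
      · -- τ q = τ p + 1 : up adjacency
        have hπ : (π (h p)).val < (π (h q)).val :=
          Fin.lt_def.mp ((hr.2 p q).mp (Fin.lt_def.mpr (by omega)))
        have hnb : ∀ x, ¬ ((π (h p)).val < (π (h x)).val ∧ (π (h x)).val < (π (h q)).val) := by
          rintro x ⟨hx1, hx2⟩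
          have q1 := Fin.lt_def.mp ((hr.2 p x).mpr (Fin.lt_def.mpr hx1))
          have q2 := Fin.lt_def.mp ((hr.2 x q).mpr (Fin.lt_def.mpr hx2))
          omega
        have hb := B.b_succ_of_no_middle hr hhit hπ hij hnb
        have hn1 : (B.blk (h p)).val + 1 < n := by have := (B.blk (h q)).isLt; omega
        have hje : (⟨(B.blk (h p)).val + 1, hn1⟩ : Fin n) = B.blk (h q) := Fin.ext (by simp; omega)
        exact hσ.1 (B.up_of_b_succ hn1 (by rw [hje]; omega))
      · -- τ p = τ q + 1 : down adjacency
        have hπ : (π (h q)).val < (π (h p)).val :=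
          Fin.lt_def.mp ((hr.2 q p).mp (Fin.lt_def.mpr (by omega)))
        have hnb : ∀ x, ¬ ((π (h q)).val < (π (h x)).val ∧ (π (h x)).val < (π (h p)).val) := by
          rintro x ⟨hx1, hx2⟩
          have q1 := Fin.lt_def.mp ((hr.2 q x).mpr (Fin.lt_def.mpr hx1))
          have q2 := Fin.lt_def.mp ((hr.2 x p).mpr (Fin.lt_def.mpr hx2))
          omega
        have hb := B.b_succ_of_no_middle hr hhit hπ (Ne.symm hij) hnb
        have hn1 : (B.blk (h p)).val + 1 < n := by have := (B.blk (h q)).isLt; omega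
        have hje : (⟨(B.blk (h p)).val + 1, hn1⟩ : Fin n) = B.blk (h q) := Fin.ext (by simp; omega)
        exact hσ.2 (B.down_of_b_succ hn1 (by rw [hje]; omega))
  · rintro ⟨i, hiD, hpi⟩
    obtain ⟨hm2, ⟨a1, ha1⟩, ⟨a2, ha2⟩⟩ := B.mem_Dbl.mp hiD
    have hoffN := B.off_add_le_N i
    have hpa2 : p < a2 := hr.1.lt_iff_lt.mp (Fin.lt_def.mpr (by omega))
    have ha2v : a2.val = p.val + 1 := by
      by_contra hcc
      have hx : p.val + 1 < a2.val := by
        have : p.val < a2.val := hpa2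
        omega
      have hxk : p.val + 1 < k := by have := a2.isLt; omega
      have w1 : (h p).val < (h ⟨p.val + 1, hxk⟩).val := hr.1 (Fin.lt_def.mpr (by simp))
      have w2 : (h ⟨p.val + 1, hxk⟩).val < (h a2).val := hr.1 (Fin.lt_def.mpr (by simp; omega))
      omega
    have hpk : p.val + 1 < k := by rw [← ha2v]; exact a2.isLt
    refine ⟨hpk, ?_⟩
    have hqe : (⟨p.val + 1, hpk⟩ : Fin k) = a2 := Fin.ext (by simp; omega)
    have h0 : offf B.m i < N := by omega
    have h1n : offf B.m i + 1 < N := by omega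
    have hva : (π (h p)).val = (π ⟨offf B.m i, h0⟩).val :=
      congrArg Fin.val (congrArg π (Fin.ext hpi))
    have hvc : (π (h a2)).val = (π ⟨offf B.m i + 1, h1n⟩).val :=
      congrArg Fin.val (congrArg π (Fin.ext ha2))
    rw [hqe]
    rcases B.pair_vals hm2 h0 h1n with ⟨hv1, hv2⟩ | ⟨hv1, hv2⟩
    · left
      have hlt : τ p < τ a2 := (hr.2 p a2).mpr (Fin.lt_def.mpr (by omega))
      have hnm : ∀ x, ¬ (τ p < τ x ∧ τ x < τ a2) := by
        rintro x ⟨hx1, hx2⟩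
        have q1 := Fin.lt_def.mp ((hr.2 p x).mp hx1)
        have q2 := Fin.lt_def.mp ((hr.2 x a2).mp hx2)
        omega
      exact perm_val_succ τ hlt hnm
    · right
      have hlt : τ a2 < τ p := (hr.2 a2 p).mpr (Fin.lt_def.mpr (by omega))
      have hnm : ∀ x, ¬ (τ a2 < τ x ∧ τ x < τ p) := by
        rintro x ⟨hx1, hx2⟩
        have q1 := Fin.lt_def.mp ((hr.2 a2 x).mp hx1)
        have q2 := Fin.lt_def.mp ((hr.2 x p).mp hx2)
        omega
      exact perm_val_succ τ hlt hnm

end BlockSystem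
namespace BlockSystem

variable {n N : ℕ} {σ : Equiv.Perm (Fin n)} {π : Equiv.Perm (Fin N)}
variable (B : BlockSystem n N σ π)

lemma idx_off {k : ℕ} {τ : Equiv.Perm (Fin k)} {h : Fin k → Fin N}
    (hr : PRep π τ h) (hhit : B.Hit h) {p : Fin k} {i : Fin n}
    (hpi : (h p).val = offf B.m i) :
    p.val = i.val + ((B.Dbl h).filter (fun x => x < i)).card := by
  have hmpos := B.m_pos i
  rw [strictMono_val_eq_card hr.1 p]
  have hset : Finset.univ.filter (fun a => h a < h p) =
      Finset.univ.filter (fun a => B.blk (h a) < i) := by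
    ext a
    simp only [Finset.mem_filter, Finset.mem_univ, true_and]
    rw [Fin.lt_def, hpi]
    exact B.lt_off_iff
  rw [hset]
  rw [Finset.card_eq_sum_card_fiberwise (f := fun a => B.blk (h a)) (t := Finset.Iio i)
    (fun a ha => by simpa using ha)]
  have hfib : ∀ l ∈ Finset.Iio i,
      ((Finset.univ.filter (fun a => B.blk (h a) < i)).filter (fun a => B.blk (h a) = l)).card
        = 1 + (if l ∈ B.Dbl h then 1 else 0) := by
    intro l hl
    rw [Finset.mem_Iio] at hl
    have heq : (Finset.univ.filter (fun a => B.blk (h a) < i)).filter (fun a => B.blk (h a) = l)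
        = Finset.univ.filter (fun a => B.blk (h a) = l) := by
      ext a
      simp only [Finset.mem_filter, Finset.mem_univ, true_and]
      constructor
      · exact fun hx => hx.2
      · intro hx; exact ⟨by rw [hx]; exact hl, hx⟩
    rw [heq, B.fiber_card hr hhit l]
  rw [Finset.sum_congr rfl hfib, Finset.sum_add_distrib, Finset.sum_const, Fin.card_Iio]
  have h2 : ∑ l ∈ Finset.Iio i, (if l ∈ B.Dbl h then 1 else 0)
      = ((B.Dbl h).filter (fun x => x < i)).card := by
    rw [← Finset.card_filter]
    congr 1
    ext l
    simp only [Finset.mem_filter, Finset.mem_Iio]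
    tauto
  rw [h2]
  simp

lemma dbl_unique (hσ : AdjacencyFree σ) {k : ℕ} {τ : Equiv.Perm (Fin k)}
    {h h' : Fin k → Fin N} (hr : PRep π τ h) (hr' : PRep π τ h')
    (hhit : B.Hit h) (hhit' : B.Hit h') : B.Dbl h = B.Dbl h' := by
  have main : ∀ v : ℕ, ∀ i : Fin n, i.val = v → (i ∈ B.Dbl h ↔ i ∈ B.Dbl h') := by
    intro v
    induction v using Nat.strong_induction_on with
    | _ v IH =>
      intro i hiv
      have hcnt : (B.Dbl h).filter (fun x => x < i) = (B.Dbl h').filter (fun x => x < i) := by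
        ext j
        simp only [Finset.mem_filter]
        constructor
        · rintro ⟨hj1, hj2⟩
          exact ⟨(IH j.val (by rw [← hiv]; exact hj2) j rfl).mp hj1, hj2⟩
        · rintro ⟨hj1, hj2⟩
          exact ⟨(IH j.val (by rw [← hiv]; exact hj2) j rfl).mpr hj1, hj2⟩
      constructor
      · intro hiD
        obtain ⟨hm2, ⟨a, ha⟩, _⟩ := B.mem_Dbl.mp hiD
        have hadj : AdjAt τ a := (B.adjAt_iff hσ hr hhit a).mpr ⟨i, hiD, ha⟩
        obtain ⟨j, hjD', haj⟩ := (B.adjAt_iff hσ hr' hhit' a).mp hadj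
        have e1 := B.idx_off hr hhit ha
        have e2 := B.idx_off hr' hhit' haj
        rw [hcnt] at e1
        rcases lt_trichotomy j i with hji | hji | hji
        · exfalso
          have hsub : (B.Dbl h').filter (fun x => x < j) ⊆ (B.Dbl h').filter (fun x => x < i) := by
            intro x hx
            simp only [Finset.mem_filter] at hx ⊢
            exact ⟨hx.1, lt_trans hx.2 hji⟩
          have hcard := Finset.card_le_card hsub
          have hjlt : j.val < i.val := hji
          omega
        · rwa [hji] at hjD'
        · exfalso
          have hsub : (B.Dbl h').filter (fun x => x < i) ⊆ (B.Dbl h').filter (fun x => x < j) := by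
            intro x hx
            simp only [Finset.mem_filter] at hx ⊢
            exact ⟨hx.1, lt_trans hx.2 hji⟩
          have hcard := Finset.card_le_card hsub
          have hjlt : i.val < j.val := hji
          omega
      · intro hiD
        obtain ⟨hm2, ⟨a, ha⟩, _⟩ := B.mem_Dbl.mp hiD
        have hadj : AdjAt τ a := (B.adjAt_iff hσ hr' hhit' a).mpr ⟨i, hiD, ha⟩
        obtain ⟨j, hjD', haj⟩ := (B.adjAt_iff hσ hr hhit a).mp hadj
        have e1 := B.idx_off hr' hhit' ha
        have e2 := B.idx_off hr hhit haj
        rw [← hcnt] at e1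
        rcases lt_trichotomy j i with hji | hji | hji
        · exfalso
          have hsub : (B.Dbl h).filter (fun x => x < j) ⊆ (B.Dbl h).filter (fun x => x < i) := by
            intro x hx
            simp only [Finset.mem_filter] at hx ⊢
            exact ⟨hx.1, lt_trans hx.2 hji⟩
          have hcard := Finset.card_le_card hsub
          have hjlt : j.val < i.val := hji
          omega
        · rwa [hji] at hjD'
        · exfalso
          have hsub : (B.Dbl h).filter (fun x => x < i) ⊆ (B.Dbl h).filter (fun x => x < j) := by
            intro x hx
            simp only [Finset.mem_filter] at hx ⊢
            exact ⟨hx.1, lt_trans hx.2 hji⟩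
          have hcard := Finset.card_le_card hsub
          have hjlt : i.val < j.val := hji
          omega
  ext i
  exact main i.val i rfl

end BlockSystem
namespace BlockSystem

variable {n N : ℕ} {σ : Equiv.Perm (Fin n)} {π : Equiv.Perm (Fin N)}
variable (B : BlockSystem n N σ π)

noncomputable def twoSet : Finset (Fin n) := Finset.univ.filter (fun i => B.m i = 2)

noncomputable def selT (T : Finset (Fin n)) : Finset (Fin N) :=
  Finset.univ.filter (fun p => p.val = offf B.m (B.blk p) ∨ B.blk p ∈ T)

noncomputable def lenT (T : Finset (Fin n)) : ℕ := (B.selT T).card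

noncomputable def hT (T : Finset (Fin n)) : Fin (B.lenT T) → Fin N :=
  fun a => (((B.selT T).orderIsoOfFin rfl) a : Fin N)

lemma hT_strictMono (T : Finset (Fin n)) : StrictMono (B.hT T) := by
  intro a c hac
  have h1 : ((B.selT T).orderIsoOfFin rfl) a < ((B.selT T).orderIsoOfFin rfl) c :=
    (((B.selT T).orderIsoOfFin rfl)).lt_iff_lt.mpr hac
  exact h1

lemma hT_mem (T : Finset (Fin n)) (a : Fin (B.lenT T)) : B.hT T a ∈ B.selT T :=
  (((B.selT T).orderIsoOfFin rfl) a).2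

lemma hT_surj (T : Finset (Fin n)) {p : Fin N} (hp : p ∈ B.selT T) :
    ∃ a, B.hT T a = p := by
  refine ⟨((B.selT T).orderIsoOfFin rfl).symm ⟨p, hp⟩, ?_⟩
  unfold hT
  rw [OrderIso.apply_symm_apply]

noncomputable def valT (T : Finset (Fin n)) : Finset (Fin N) := (B.selT T).image π

lemma card_valT (T : Finset (Fin n)) : (B.valT T).card = B.lenT T :=
  Finset.card_image_of_injective _ π.injective

noncomputable def permT (T : Finset (Fin n)) : Equiv.Perm (Fin (B.lenT T)) :=
  Equiv.ofBijective
    (fun a => ((B.valT T).orderIsoOfFin (B.card_valT T)).symm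
      ⟨π (B.hT T a), Finset.mem_image_of_mem _ (B.hT_mem T a)⟩)
    (by
      rw [← Finite.injective_iff_bijective]
      intro a c hac
      have h1 := congrArg (((B.valT T).orderIsoOfFin (B.card_valT T))) hac
      rw [OrderIso.apply_symm_apply, OrderIso.apply_symm_apply] at h1
      have h2 : π (B.hT T a) = π (B.hT T c) := congrArg Subtype.val h1
      exact (B.hT_strictMono T).injective (π.injective h2))

lemma permT_rep (T : Finset (Fin n)) : PRep π (B.permT T) (B.hT T) := by
  refine ⟨B.hT_strictMono T, fun a c => ?_⟩
  rw [permT]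
  have h1 : ∀ x y : {v // v ∈ B.valT T},
      ((B.valT T).orderIsoOfFin (B.card_valT T)).symm x
        < ((B.valT T).orderIsoOfFin (B.card_valT T)).symm y ↔ x < y :=
    fun x y => (((B.valT T).orderIsoOfFin (B.card_valT T)).symm).lt_iff_lt
  simp only [Equiv.ofBijective_apply]
  rw [h1]
  exact Iff.rfl

lemma mem_selT {T : Finset (Fin n)} {p : Fin N} :
    p ∈ B.selT T ↔ (p.val = offf B.m (B.blk p) ∨ B.blk p ∈ T) := by simp [selT]

lemma off_mem_selT (T : Finset (Fin n)) (i : Fin n) :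
    ∀ hlt : offf B.m i < N, (⟨offf B.m i, hlt⟩ : Fin N) ∈ B.selT T := by
  intro hlt
  rw [B.mem_selT]
  left
  rw [B.blk_eq (p := ⟨offf B.m i, hlt⟩) (i := i) (by simp) (by simp; exact B.m_pos i)]

lemma hT_hit (T : Finset (Fin n)) : B.Hit (B.hT T) := by
  intro i
  have hlt : offf B.m i < N := by have := B.off_add_le_N i; have := B.m_pos i; omega
  obtain ⟨a, ha⟩ := B.hT_surj T (B.off_mem_selT T i hlt)
  refine ⟨a, ?_⟩
  rw [ha]
  exact B.blk_eq (i := i) (by simp) (by simp; exact B.m_pos i)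

lemma dbl_hT {T : Finset (Fin n)} (hsub : T ⊆ B.twoSet) : B.Dbl (B.hT T) = T := by
  ext i
  rw [B.mem_Dbl]
  constructor
  · rintro ⟨hm2, -, ⟨a, ha⟩⟩
    have hblk : B.blk (B.hT T a) = i := by
      apply B.blk_eq <;> omega
    have hmem := B.hT_mem T a
    rw [B.mem_selT, hblk] at hmem
    rcases hmem with hc | hc
    · omega
    · exact hc
  · intro hiT
    have hm2 : B.m i = 2 := by
      have := hsub hiT
      simpa [twoSet] using this
    have hoffN := B.off_add_le_N i
    have hlt0 : offf B.m i < N := by omega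
    have hlt1 : offf B.m i + 1 < N := by omega
    obtain ⟨a0, ha0⟩ := B.hT_surj T (B.off_mem_selT T i hlt0)
    have hmem1 : (⟨offf B.m i + 1, hlt1⟩ : Fin N) ∈ B.selT T := by
      rw [B.mem_selT, B.blk_eq (p := ⟨offf B.m i + 1, hlt1⟩) (i := i) (by simp) (by simp; omega)]
      exact Or.inr hiT
    obtain ⟨a1, ha1⟩ := B.hT_surj T hmem1
    exact ⟨hm2, ⟨a0, by rw [ha0]⟩, ⟨a1, by rw [ha1]⟩⟩

lemma lenT_eq {T : Finset (Fin n)} (hsub : T ⊆ B.twoSet) : B.lenT T = n + T.card := by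
  have := B.card_of_rep (B.permT_rep T) (B.hT_hit T)
  rwa [B.dbl_hT hsub] at this

noncomputable def hsig : Fin n → Fin N :=
  fun i => ⟨offf B.m i, by have := B.off_add_le_N i; have := B.m_pos i; omega⟩

lemma hsig_blk (i : Fin n) : B.blk (B.hsig i) = i :=
  B.blk_eq (by simp [hsig]) (by simp [hsig]; exact B.m_pos i)

lemma hsig_rep : PRep π σ B.hsig := by
  constructor
  · intro a c hac
    have h1 := B.off_add_le hac
    have h2 := B.m_pos a
    exact Fin.lt_def.mpr (by simp [hsig]; omega)
  · intro a c
    by_cases hac : a = c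
    · subst hac; simp
    · rw [B.hord a c]
      have := B.val_lt_iff (P := B.hsig a) (Q := B.hsig c)
        (by rw [B.hsig_blk, B.hsig_blk]; exact hac)
      rw [B.hsig_blk, B.hsig_blk] at this
      rw [Fin.lt_def, this]

lemma id_rep : PRep π π (fun p => p) := ⟨strictMono_id, fun _ _ => Iff.rfl⟩

lemma id_hit : B.Hit (fun p : Fin N => p) := by
  intro i
  have hlt : offf B.m i < N := by have := B.off_add_le_N i; have := B.m_pos i; omega
  exact ⟨⟨offf B.m i, hlt⟩, B.blk_eq (by simp) (by simp; exact B.m_pos i)⟩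

lemma id_dbl : B.Dbl (fun p : Fin N => p) = B.twoSet := by
  ext i
  rw [B.mem_Dbl]
  simp only [twoSet, Finset.mem_filter, Finset.mem_univ, true_and]
  constructor
  · rintro ⟨hm2, -, -⟩; exact hm2
  · intro hm2
    have hoffN := B.off_add_le_N i
    exact ⟨hm2, ⟨⟨offf B.m i, by omega⟩, rfl⟩, ⟨⟨offf B.m i + 1, by omega⟩, rfl⟩⟩

lemma N_eq : N = n + (B.twoSet).card := by
  have := B.card_of_rep (τ := π) (h := fun p => p) ⟨strictMono_id, fun _ _ => Iff.rfl⟩ B.id_hit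
  rwa [B.id_dbl] at this

end BlockSystem
namespace BlockSystem

variable {n N : ℕ} {σ : Equiv.Perm (Fin n)} {π : Equiv.Perm (Fin N)}
variable (B : BlockSystem n N σ π)

lemma contains_sigma_permT (hσ : AdjacencyFree σ) (T : Finset (Fin n)) :
    Contains σ (B.permT T) :=
  B.contains_of_rep B.hsig_rep (B.permT_rep T) (B.hT_hit T)
    (by rw [B.dbl_of_rep_sigma hσ B.hsig_rep]; exact Finset.empty_subset _)

lemma contains_permT_pi {T : Finset (Fin n)} (hsub : T ⊆ B.twoSet) :
    Contains (B.permT T) π :=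
  B.contains_of_rep (B.permT_rep T) (id_rep (π := π)) B.id_hit
    (by rw [B.dbl_hT hsub, B.id_dbl]; exact hsub)

lemma contains_permT_mono {T U : Finset (Fin n)} (hT : T ⊆ B.twoSet) (hU : U ⊆ B.twoSet)
    (hTU : T ⊆ U) : Contains (B.permT T) (B.permT U) :=
  B.contains_of_rep (B.permT_rep T) (B.permT_rep U) (B.hT_hit U)
    (by rw [B.dbl_hT hT, B.dbl_hT hU]; exact hTU)

lemma contains_permT_empty_sigma (hσ : AdjacencyFree σ) : Contains (B.permT ∅) σ :=
  B.contains_of_rep (B.permT_rep ∅) B.hsig_rep (B.hit_of_rep_sigma hσ B.hsig_rep)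
    (by rw [B.dbl_hT (Finset.empty_subset _), B.dbl_of_rep_sigma hσ B.hsig_rep])

lemma classify (hσ : AdjacencyFree σ) {kt : ℕ} {τ : Equiv.Perm (Fin kt)}
    (h1 : Contains σ τ) (h2 : Contains τ π) :
    ∃ T, T ⊆ B.twoSet ∧ kt = n + T.card ∧
      (⟨kt, τ⟩ : SigmaPerm) = ⟨B.lenT T, B.permT T⟩ := by
  obtain ⟨f, hf⟩ := h2
  have hrf : PRep π τ f := ⟨f.strictMono, hf⟩
  obtain ⟨g, hg⟩ := h1
  have hrsig : PRep π σ (fun i => f (g i)) :=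
    ⟨f.strictMono.comp g.strictMono, fun i j => (hg i j).trans (hf (g i) (g j))⟩
  have hhitf : B.Hit f := fun i => ⟨g i, B.rep_sigma_blk hσ hrsig i⟩
  have hTsub : B.Dbl f ⊆ B.twoSet := by
    intro i hi
    rw [B.mem_Dbl] at hi
    simp [twoSet, hi.1]
  have hk : kt = n + (B.Dbl f).card := B.card_of_rep hrf hhitf
  have c1 : Contains τ (B.permT (B.Dbl f)) :=
    B.contains_of_rep hrf (B.permT_rep (B.Dbl f)) (B.hT_hit (B.Dbl f))
      (by rw [B.dbl_hT hTsub])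
  exact ⟨B.Dbl f, hTsub, hk,
    sigma_eq_of_contains (by have hlen := B.lenT_eq hTsub; omega) c1⟩

lemma permT_subset_of_contains (hσ : AdjacencyFree σ) {T U : Finset (Fin n)}
    (hT : T ⊆ B.twoSet) (hU : U ⊆ B.twoSet)
    (hc : Contains (B.permT T) (B.permT U)) : T ⊆ U := by
  obtain ⟨f, hf⟩ := hc
  have hrH : PRep π (B.permT T) (fun a => B.hT U (f a)) :=
    ⟨(B.hT_strictMono U).comp f.strictMono,
      fun a c => (hf a c).trans ((B.permT_rep U).2 (f a) (f c))⟩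
  obtain ⟨g, hg⟩ := B.contains_sigma_permT hσ T
  have hrsig : PRep π σ (fun i => B.hT U (f (g i))) :=
    ⟨hrH.1.comp g.strictMono, fun i j => (hg i j).trans (hrH.2 (g i) (g j))⟩
  have hhitH : B.Hit (fun a => B.hT U (f a)) := fun i => ⟨g i, B.rep_sigma_blk hσ hrsig i⟩
  have huniq := B.dbl_unique hσ (B.permT_rep T) hrH (B.hT_hit T) hhitH
  rw [B.dbl_hT hT] at huniq
  intro i hiT
  have hiD : i ∈ B.Dbl (fun a => B.hT U (f a)) := by rw [← huniq]; exact hiT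
  rw [B.mem_Dbl] at hiD
  obtain ⟨hm2, ⟨a1, e1⟩, ⟨a2, e2⟩⟩ := hiD
  have hmem : i ∈ B.Dbl (B.hT U) := B.mem_Dbl.mpr ⟨hm2, ⟨f a1, e1⟩, ⟨f a2, e2⟩⟩
  rwa [B.dbl_hT hU] at hmem

end BlockSystem

lemma BlockSystem.contains_sigma_pi {n N : ℕ} {σ : Equiv.Perm (Fin n)} {π : Equiv.Perm (Fin N)}
    (B : BlockSystem n N σ π) (hσ : AdjacencyFree σ) : Contains σ π :=
  B.contains_of_rep B.hsig_rep (id_rep (π := π)) B.id_hit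
    (by rw [B.dbl_of_rep_sigma hσ B.hsig_rep]; exact Finset.empty_subset _)

noncomputable def castPerm {k k' : ℕ} (h : k = k') (τ : Equiv.Perm (Fin k)) :
    Equiv.Perm (Fin k') := Equiv.permCongr (finCongr h) τ

lemma castPerm_rfl {k : ℕ} (τ : Equiv.Perm (Fin k)) : castPerm rfl τ = τ := by
  apply Equiv.ext
  intro x
  simp [castPerm, Equiv.permCongr_apply]

lemma castPerm_sigma_eq {k k' : ℕ} (h : k = k') (τ : Equiv.Perm (Fin k)) :
    (⟨k, τ⟩ : SigmaPerm) = ⟨k', castPerm h τ⟩ := by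
  subst h; rw [castPerm_rfl]

lemma contains_cast_left {a b c : ℕ} (h : a = b) (x : Equiv.Perm (Fin a))
    (z : Equiv.Perm (Fin c)) : Contains (castPerm h x) z ↔ Contains x z := by
  subst h; rw [castPerm_rfl]

lemma contains_cast_right {a b c : ℕ} (h : a = b) (x : Equiv.Perm (Fin a))
    (z : Equiv.Perm (Fin c)) : Contains z (castPerm h x) ↔ Contains z x := by
  subst h; rw [castPerm_rfl]

lemma sigma_contains_iff_left {a b c : ℕ} {x : Equiv.Perm (Fin a)} {y : Equiv.Perm (Fin b)}
    {z : Equiv.Perm (Fin c)} (h : (⟨a, x⟩ : SigmaPerm) = ⟨b, y⟩) :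
    Contains x z ↔ Contains y z := by
  obtain ⟨h1, h2⟩ := Sigma.mk.inj_iff.mp h
  subst h1
  rw [eq_of_heq h2]

lemma sigma_contains_iff_right {a b c : ℕ} {x : Equiv.Perm (Fin a)} {y : Equiv.Perm (Fin b)}
    {z : Equiv.Perm (Fin c)} (h : (⟨a, x⟩ : SigmaPerm) = ⟨b, y⟩) :
    Contains z x ↔ Contains z y := by
  obtain ⟨h1, h2⟩ := Sigma.mk.inj_iff.mp h
  subst h1
  rw [eq_of_heq h2]

lemma mu_sigma_congr {k : ℕ} (σ0 : Equiv.Perm (Fin k)) {a b : ℕ} {x : Equiv.Perm (Fin a)}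
    {y : Equiv.Perm (Fin b)} (h : (⟨a, x⟩ : SigmaPerm) = ⟨b, y⟩) :
    mu σ0 a x = mu σ0 b y := by
  obtain ⟨h1, h2⟩ := Sigma.mk.inj_iff.mp h
  subst h1
  rw [eq_of_heq h2]
namespace BlockSystem

variable {n N : ℕ} {σ : Equiv.Perm (Fin n)} {π : Equiv.Perm (Fin N)}
variable (B : BlockSystem n N σ π)

lemma permT_eq_of_sigma_eq (hσ : AdjacencyFree σ) {T U : Finset (Fin n)}
    (hT : T ⊆ B.twoSet) (hU : U ⊆ B.twoSet)
    (hs : (⟨B.lenT T, B.permT T⟩ : SigmaPerm) = ⟨B.lenT U, B.permT U⟩) : T = U := by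
  have c1 : Contains (B.permT T) (B.permT U) :=
    (sigma_contains_iff_left hs).mpr (contains_refl _)
  have c2 : Contains (B.permT U) (B.permT T) :=
    (sigma_contains_iff_right hs).mpr (contains_refl _)
  exact Finset.Subset.antisymm (B.permT_subset_of_contains hσ hT hU c1)
    (B.permT_subset_of_contains hσ hU hT c2)

lemma mu_permT (hσ : AdjacencyFree σ) :
    ∀ c : ℕ, ∀ T : Finset (Fin n), T ⊆ B.twoSet → T.card = c →
      mu σ (B.lenT T) (B.permT T) = (-1) ^ T.card := by
  intro c
  induction c using Nat.strong_induction_on with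
  | _ c IH =>
    intro T hTsub hTc
    have hcont : Contains σ (B.permT T) := B.contains_sigma_permT hσ T
    have hlen := B.lenT_eq hTsub
    by_cases hTe : T = ∅
    · subst hTe
      have hback : Contains (B.permT ∅) σ := B.contains_permT_empty_sigma hσ
      rw [mu, if_pos hcont, if_pos hback]
      simp
    · have hback : ¬ Contains (B.permT T) σ := by
        intro hc
        have hle := contains_le hc
        have hcardpos : 0 < T.card := Finset.card_pos.mpr (Finset.nonempty_iff_ne_empty.mpr hTe)
        omega
      rw [mu, if_pos hcont, if_neg hback]
      have hinner : ∀ mv : { x // x ∈ Finset.range (B.lenT T) },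
          (∑ τ' : Equiv.Perm (Fin mv.1),
            if Contains σ τ' ∧ Contains τ' (B.permT T) then mu σ mv.1 τ' else 0)
          = ∑ U ∈ T.powerset.filter (fun U => n + U.card = mv.1), (-1 : ℤ) ^ U.card := by
        intro mv
        have hmlt : mv.1 < B.lenT T := Finset.mem_range.mp mv.2
        rw [← Finset.sum_filter]
        refine (Finset.sum_bij
          (i := fun U (hU : U ∈ T.powerset.filter (fun U => n + U.card = mv.1)) =>
            castPerm (show B.lenT U = mv.1 by
              have hU' := Finset.mem_filter.mp hU
              have hUsub : U ⊆ B.twoSet :=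
                fun x hx => hTsub (Finset.mem_powerset.mp hU'.1 hx)
              rw [B.lenT_eq hUsub]; exact hU'.2) (B.permT U))
          ?_ ?_ ?_ ?_).symm
        · -- maps into filter
          intro U hU
          have hU' := Finset.mem_filter.mp hU
          have hUT : U ⊆ T := Finset.mem_powerset.mp hU'.1
          have hUsub : U ⊆ B.twoSet := fun x hx => hTsub (hUT hx)
          simp only [Finset.mem_filter, Finset.mem_univ, true_and]
          constructor
          · rw [contains_cast_right]
            exact B.contains_sigma_permT hσ U
          · rw [contains_cast_left]
            exact B.contains_permT_mono hUsub hTsub hUT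
        · -- injective
          intro U hU U' hU' heq
          have h1 := Finset.mem_filter.mp hU
          have h2 := Finset.mem_filter.mp hU'
          have hUsub : U ⊆ B.twoSet := fun x hx => hTsub (Finset.mem_powerset.mp h1.1 hx)
          have hU'sub : U' ⊆ B.twoSet := fun x hx => hTsub (Finset.mem_powerset.mp h2.1 hx)
          apply B.permT_eq_of_sigma_eq hσ hUsub hU'sub
          calc (⟨B.lenT U, B.permT U⟩ : SigmaPerm)
              = ⟨mv.1, castPerm _ (B.permT U)⟩ := castPerm_sigma_eq _ _
            _ = ⟨mv.1, castPerm _ (B.permT U')⟩ := by rw [heq]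
            _ = ⟨B.lenT U', B.permT U'⟩ := (castPerm_sigma_eq _ _).symm
        · -- surjective
          intro τ' hτ'
          have hτ'2 := Finset.mem_filter.mp hτ'
          have hc1 : Contains σ τ' := hτ'2.2.1
          have hc2 : Contains τ' (B.permT T) := hτ'2.2.2
          have hc3 : Contains τ' π := contains_trans hc2 (B.contains_permT_pi hTsub)
          obtain ⟨U, hUsub, hk, hsig⟩ := B.classify hσ hc1 hc3
          have hcur : Contains (B.permT U) (B.permT T) :=
            (sigma_contains_iff_left hsig).mp hc2
          have hUT : U ⊆ T := B.permT_subset_of_contains hσ hUsub hTsub hcur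
          have hmem : U ∈ T.powerset.filter (fun U => n + U.card = mv.1) := by
            simp only [Finset.mem_filter, Finset.mem_powerset]
            exact ⟨hUT, by omega⟩
          refine ⟨U, hmem, ?_⟩
          have hsig2 : (⟨mv.1, τ'⟩ : SigmaPerm)
              = ⟨mv.1, castPerm (show B.lenT U = mv.1 by
                  have := B.lenT_eq hUsub; omega) (B.permT U)⟩ :=
            hsig.trans (castPerm_sigma_eq _ _)
          obtain ⟨-, h2⟩ := Sigma.mk.inj_iff.mp hsig2
          exact (eq_of_heq h2).symm
        · -- values agree
          intro U hU
          have hU' := Finset.mem_filter.mp hU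
          have hUT : U ⊆ T := Finset.mem_powerset.mp hU'.1
          have hUsub : U ⊆ B.twoSet := fun x hx => hTsub (hUT hx)
          have hUcard : U.card < c := by
            have := B.lenT_eq hUsub
            omega
          rw [← mu_sigma_congr σ (castPerm_sigma_eq _ (B.permT U))]
          exact (IH U.card hUcard U hUsub rfl).symm
      rw [Finset.sum_congr rfl (fun mv _ => hinner mv)]
      rw [Finset.sum_attach (Finset.range (B.lenT T))
        (fun mv => ∑ U ∈ T.powerset.filter (fun U => n + U.card = mv), (-1 : ℤ) ^ U.card)]
      have hfsets : ∀ mv ∈ Finset.range (B.lenT T),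
          T.powerset.filter (fun U => n + U.card = mv)
            = (T.powerset.erase T).filter (fun U => n + U.card = mv) := by
        intro mv hmv
        rw [Finset.mem_range] at hmv
        ext U
        simp only [Finset.mem_filter, Finset.mem_erase, Finset.mem_powerset]
        constructor
        · rintro ⟨hU1, hU2⟩
          refine ⟨⟨?_, hU1⟩, hU2⟩
          intro hUeq
          subst hUeq
          omega
        · rintro ⟨⟨-, hU1⟩, hU2⟩
          exact ⟨hU1, hU2⟩
      rw [Finset.sum_congr rfl (fun mv hmv => by rw [hfsets mv hmv])]
      rw [Finset.sum_fiberwise_of_maps_to (g := fun U : Finset (Fin n) => n + U.card)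
        (fun U hU => by
          rw [Finset.mem_erase, Finset.mem_powerset] at hU
          rw [Finset.mem_range]
          have hss : U ⊂ T := HasSubset.Subset.ssubset_of_ne hU.2 hU.1
          have := Finset.card_lt_card hss
          show n + U.card < B.lenT T
          omega)
        (fun U => (-1 : ℤ) ^ U.card)]
      have hsum : (-1 : ℤ) ^ T.card + ∑ U ∈ T.powerset.erase T, (-1 : ℤ) ^ U.card = 0 := by
        have haux := Finset.add_sum_erase T.powerset (fun U : Finset (Fin n) => (-1 : ℤ) ^ U.card)
          (Finset.mem_powerset_self T)
        rw [Finset.sum_powerset_neg_one_pow_card, if_neg hTe] at haux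
        exact haux
      have : ∑ U ∈ T.powerset.erase T, (-1 : ℤ) ^ U.card = -(-1 : ℤ) ^ T.card := by omega
      rw [this]
      ring

end BlockSystem

lemma BlockSystem.mu_pi {n N : ℕ} {σ : Equiv.Perm (Fin n)} {π : Equiv.Perm (Fin N)}
    (B : BlockSystem n N σ π) (hσ : AdjacencyFree σ) : mu σ N π = (-1) ^ (N - n) := by
  obtain ⟨TS, hsub, hk, hsig⟩ := B.classify hσ (B.contains_sigma_pi hσ) (contains_refl π)
  rw [mu_sigma_congr σ hsig, B.mu_permT hσ TS.card TS hsub rfl]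
  congr 1
  omega
theorem boolean_lattice_inflation (n N : ℕ) (σ : Equiv.Perm (Fin n))
    (α : Fin n → SigmaPerm) (π : Equiv.Perm (Fin N))
    (hσ : AdjacencyFree σ) (hinf : IsInflation σ α π) :
    ((∀ i, α i = ⟨1, pone⟩ ∨ α i = ⟨2, p12⟩ ∨ α i = ⟨2, p21⟩) →
      (∃ e : {τ : SigmaPerm // SContains ⟨n, σ⟩ τ ∧ SContains τ ⟨N, π⟩} ≃ Finset (Fin (N - n)),
        ∀ x y, SContains x.1 y.1 ↔ e x ⊆ e y) ∧
      mu σ N π = (-1) ^ (N - n)) ∧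
    (mu σ N π = 0 →
      ∃ i, ¬ (α i = ⟨1, pone⟩ ∨ α i = ⟨2, p12⟩ ∨ α i = ⟨2, p21⟩)) := by
  have key : (∀ i, α i = ⟨1, pone⟩ ∨ α i = ⟨2, p12⟩ ∨ α i = ⟨2, p21⟩) →
      (∃ e : {τ : SigmaPerm // SContains ⟨n, σ⟩ τ ∧ SContains τ ⟨N, π⟩} ≃ Finset (Fin (N - n)),
        ∀ x y, SContains x.1 y.1 ↔ e x ⊆ e y) ∧ mu σ N π = (-1) ^ (N - n) := by
    intro hα
    obtain ⟨hpos, hNsum, b, hbval, hbord⟩ := hinf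
    have hm : ∀ i, (α i).1 = 1 ∨ (α i).1 = 2 := by
      intro i; rcases hα i with h | h | h <;> rw [h] <;> simp
    have B : BlockSystem n N σ π :=
      { m := fun i => (α i).1
        b := b
        hm := hm
        hN := hNsum
        hval := by
          intro i j hjlt hj
          have hb : (π ⟨offf (fun i' => (α i').1) i + j, hj⟩).val
              = b i + ((α i).2 ⟨j, hjlt⟩).val := hbval i ⟨j, hjlt⟩ hj
          have hlt2 : ((α i).2 ⟨j, hjlt⟩).val < (α i).1 := (((α i).2) ⟨j, hjlt⟩).isLt
          have hbeta : (fun i' : Fin n => (α i').1) i = (α i).1 := rfl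
          omega
        hord := hbord }
    have hNn := B.N_eq
    have hcard : (B.twoSet).card = N - n := by omega
    have E0 := (B.twoSet).orderIsoOfFin hcard
    have hemb : Function.Injective (fun a : Fin (N - n) => ((E0 a : Fin n))) := by
      intro a c hac
      apply E0.injective
      exact Subtype.ext hac
    let emb : Fin (N - n) ↪ Fin n := ⟨fun a => (E0 a : Fin n), hemb⟩
    let Tof : Finset (Fin (N - n)) → Finset (Fin n) := fun A => A.map emb
    have hTsub : ∀ A, Tof A ⊆ B.twoSet := by
      intro A x hx
      simp only [Tof, Finset.mem_map] at hx
      obtain ⟨a, -, rfl⟩ := hx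
      exact (E0 a).2
    have hTmono : ∀ A A' : Finset (Fin (N - n)), (Tof A ⊆ Tof A' ↔ A ⊆ A') :=
      fun A A' => Finset.map_subset_map
    have hTsurj : ∀ T, T ⊆ B.twoSet → ∃ A, Tof A = T := by
      intro T hT
      refine ⟨Finset.univ.filter (fun a => (E0 a : Fin n) ∈ T), ?_⟩
      ext i
      simp only [Tof, Finset.mem_map, Finset.mem_filter, Finset.mem_univ, true_and]
      constructor
      · rintro ⟨a, ha, rfl⟩
        exact ha
      · intro hi
        refine ⟨E0.symm ⟨i, hT hi⟩, ?_, ?_⟩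
        · rw [OrderIso.apply_symm_apply]; exact hi
        · show ((E0 (E0.symm ⟨i, hT hi⟩) : Fin n)) = i
          rw [OrderIso.apply_symm_apply]
    let Efun : Finset (Fin (N - n)) → {τ : SigmaPerm // SContains ⟨n, σ⟩ τ ∧ SContains τ ⟨N, π⟩} :=
      fun A => ⟨⟨B.lenT (Tof A), B.permT (Tof A)⟩,
        B.contains_sigma_permT hσ (Tof A), B.contains_permT_pi (hTsub A)⟩
    have hEval : ∀ A, (Efun A).1 = ⟨B.lenT (Tof A), B.permT (Tof A)⟩ := fun A => rfl
    have hEinj : Function.Injective Efun := by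
      intro A A' hE
      have hs : (⟨B.lenT (Tof A), B.permT (Tof A)⟩ : SigmaPerm)
          = ⟨B.lenT (Tof A'), B.permT (Tof A')⟩ := congrArg Subtype.val hE
      have hTT := B.permT_eq_of_sigma_eq hσ (hTsub A) (hTsub A') hs
      exact Finset.map_injective emb hTT
    have hEsurj : Function.Surjective Efun := by
      rintro ⟨⟨k, τ⟩, h1, h2⟩
      obtain ⟨T, hT, hk, hsig⟩ := B.classify hσ h1 h2
      obtain ⟨A, hA⟩ := hTsurj T hT
      refine ⟨A, ?_⟩
      apply Subtype.ext
      show (⟨B.lenT (Tof A), B.permT (Tof A)⟩ : SigmaPerm) = ⟨k, τ⟩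
      rw [hA]
      exact hsig.symm
    refine ⟨⟨(Equiv.ofBijective Efun ⟨hEinj, hEsurj⟩).symm, ?_⟩, B.mu_pi hσ⟩
    intro x y
    set A := (Equiv.ofBijective Efun ⟨hEinj, hEsurj⟩).symm x with hA
    set A' := (Equiv.ofBijective Efun ⟨hEinj, hEsurj⟩).symm y with hA'
    have hx : Efun A = x := by
      rw [hA]
      exact (Equiv.ofBijective Efun ⟨hEinj, hEsurj⟩).apply_symm_apply x
    have hy : Efun A' = y := by
      rw [hA']
      exact (Equiv.ofBijective Efun ⟨hEinj, hEsurj⟩).apply_symm_apply y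
    rw [← hx, ← hy]
    constructor
    · intro hc
      have hcc : Contains (B.permT (Tof A)) (B.permT (Tof A')) := hc
      exact (hTmono A A').mp (B.permT_subset_of_contains hσ (hTsub A) (hTsub A') hcc)
    · intro hAA
      exact B.contains_permT_mono (hTsub A) (hTsub A') ((hTmono A A').mpr hAA)
  refine ⟨key, ?_⟩
  intro hmu
  by_contra hno
  push_neg at hno
  have h2 := (key hno).2
  rw [h2] at hmu
  exact pow_ne_zero _ (by norm_num : (-1 : ℤ) ≠ 0) hmu
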